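/- Let α ∈ Q_{−1}(2k) and σ ∈ Q_{−1}(2(k−2)), each with at most r/2 parts. Then the set of partitions τ ∈ Q_{−1}(2(k−1)) with σ ⊂₂ τ ⊂₂ α contains at most two elements. -/

import Mathlib

/-- A Young diagram is in `Q₋₁` (of its size) if for every diagonal box `(i,i)`
the leg length exceeds the arm length by exactly one. -/
def IsQneg1 (μ : YoungDiagram) : Prop :=
  ∀ i : ℕ, (i, i) ∈ μ → μ.colLen i = μ.rowLen i + 1

/-- `β ⊂₂ α` : `β ⊆ α` and the two boxes of `α/β` are not horizontally adjacent. -/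
def Sub2 (β α : YoungDiagram) : Prop :=
  β ≤ α ∧ ¬ ∃ i j : ℕ, α.cells \ β.cells = {(i, j), (i, j + 1)}


lemma rowLen_mono {β γ : YoungDiagram} (h : β ≤ γ) (i : ℕ) :
    β.rowLen i ≤ γ.rowLen i := by
  by_contra hc
  push_neg at hc
  have : (i, γ.rowLen i) ∈ β := YoungDiagram.mem_iff_lt_rowLen.2 hc
  have : (i, γ.rowLen i) ∈ γ := h this
  exact absurd (YoungDiagram.mem_iff_lt_rowLen.1 this) (lt_irrefl _)

lemma fiber_card {μ : YoungDiagram} (hQ : IsQneg1 μ) (i : ℕ) :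
    (μ.cells.filter (fun c => min c.1 c.2 = i)).card = 2 * (μ.rowLen i - i) := by
  have hset : μ.cells.filter (fun c => min c.1 c.2 = i)
      = ({i} ×ˢ Finset.Ico i (μ.rowLen i)) ∪ (Finset.Ioo i (μ.colLen i) ×ˢ {i}) := by
    ext ⟨x, y⟩
    simp only [Finset.mem_filter, YoungDiagram.mem_cells, Finset.mem_union,
      Finset.mem_product, Finset.mem_singleton, Finset.mem_Ico, Finset.mem_Ioo]
    constructor
    · rintro ⟨hm, hmin⟩
      rcases le_total x y with hxy | hyx
      · left
        have hx : x = i := by omega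
        subst hx
        exact ⟨rfl, by omega, YoungDiagram.mem_iff_lt_rowLen.1 hm⟩
      · have hy : y = i := by omega
        subst hy
        rcases eq_or_lt_of_le hyx with h | h
        · left
          subst h
          exact ⟨rfl, le_refl _, YoungDiagram.mem_iff_lt_rowLen.1 hm⟩
        · right
          exact ⟨⟨h, YoungDiagram.mem_iff_lt_colLen.1 hm⟩, rfl⟩
    · rintro (⟨rfl, h1, h2⟩ | ⟨⟨h1, h2⟩, rfl⟩)
      · exact ⟨YoungDiagram.mem_iff_lt_rowLen.2 h2, by omega⟩
      · exact ⟨YoungDiagram.mem_iff_lt_colLen.2 h2, by omega⟩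
  rw [hset, Finset.card_union_of_disjoint]
  · rw [Finset.card_product, Finset.card_product, Finset.card_singleton,
      Nat.card_Ico, Nat.card_Ioo]
    by_cases hd : (i, i) ∈ μ
    · have h1 : i < μ.rowLen i := YoungDiagram.mem_iff_lt_rowLen.1 hd
      have h2 : μ.colLen i = μ.rowLen i + 1 := hQ i hd
      omega
    · have h1 : μ.rowLen i ≤ i := by
        by_contra hc; exact hd (YoungDiagram.mem_iff_lt_rowLen.2 (by omega))
      have h2 : μ.colLen i ≤ i := by
        by_contra hc; exact hd (YoungDiagram.mem_iff_lt_colLen.2 (by omega))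
      omega
  · rw [Finset.disjoint_left]
    rintro ⟨x, y⟩ hx hy
    simp only [Finset.mem_product, Finset.mem_singleton, Finset.mem_Ico,
      Finset.mem_Ioo] at hx hy
    omega

lemma card_formula {μ : YoungDiagram} (hQ : IsQneg1 μ) {N : ℕ} (hN : μ.colLen 0 ≤ N) :
    μ.card = 2 * ∑ i ∈ Finset.range N, (μ.rowLen i - i) := by
  have := Finset.card_eq_sum_card_fiberwise
    (f := fun c : ℕ × ℕ => min c.1 c.2) (s := μ.cells) (t := Finset.range N)
    (fun c hc => by
      simp only [Finset.coe_range, Set.mem_Iio, Finset.mem_coe, Finset.mem_range]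
      have : c.1 < μ.colLen c.2 := YoungDiagram.mem_iff_lt_colLen.1 (by
        simpa using hc)
      have h2 : μ.colLen c.2 ≤ μ.colLen 0 := μ.colLen_anti 0 c.2 (Nat.zero_le _)
      omega)
  rw [YoungDiagram.card, this, Finset.mul_sum]
  exact Finset.sum_congr rfl fun i _ => fiber_card hQ i

lemma step {β γ : YoungDiagram} (hβ : IsQneg1 β) (hγ : IsQneg1 γ)
    (hle : β ≤ γ) (hcard : γ.card = β.card + 2) :
    ∃ i c : ℕ, i ≤ c ∧ γ.cells \ β.cells = {(i, c), (c + 1, i)} := by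
  have hβN : β.colLen 0 ≤ γ.colLen 0 := by
    have := rowLen_mono (YoungDiagram.transpose_mono hle) 0
    simpa [YoungDiagram.rowLen_transpose] using this
  have hsumβ := card_formula hβ hβN
  have hsumγ := card_formula hγ (le_refl (γ.colLen 0))
  have hsum : ∑ i ∈ Finset.range (γ.colLen 0), (γ.rowLen i - i)
      = ∑ i ∈ Finset.range (γ.colLen 0), (β.rowLen i - i) + 1 := by omega
  have hpw : ∀ i, β.rowLen i - i ≤ γ.rowLen i - i := fun i =>
    Nat.sub_le_sub_right (rowLen_mono hle i) i
  have hex : ∃ i ∈ Finset.range (γ.colLen 0), β.rowLen i - i < γ.rowLen i - i := by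
    by_contra hc
    push_neg at hc
    have := Finset.sum_le_sum hc
    omega
  obtain ⟨i, hiN, hlt⟩ := hex
  have hfi : γ.rowLen i - i = (β.rowLen i - i) + 1 := by
    have h1 := Finset.add_sum_erase (Finset.range (γ.colLen 0))
      (fun j => γ.rowLen j - j) hiN
    have h2 := Finset.add_sum_erase (Finset.range (γ.colLen 0))
      (fun j => β.rowLen j - j) hiN
    have h3 : ∑ j ∈ (Finset.range (γ.colLen 0)).erase i, (β.rowLen j - j) ≤
        ∑ j ∈ (Finset.range (γ.colLen 0)).erase i, (γ.rowLen j - j) :=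
      Finset.sum_le_sum fun j _ => hpw j
    omega
  have hcard' : γ.cells.card = β.cells.card + 2 := hcard
  have hskewcard : (γ.cells \ β.cells).card = 2 := by
    rw [Finset.card_sdiff_of_subset (YoungDiagram.cells_subset_iff.2 hle)]
    omega
  have key : ∃ i c : ℕ, i ≤ c ∧ ((i, c) ∈ γ ∧ (i, c) ∉ β) ∧
      ((c + 1, i) ∈ γ ∧ (c + 1, i) ∉ β) := by
    by_cases hB : β.rowLen i ≤ i
    · -- new diagonal hook
      have hγr : γ.rowLen i = i + 1 := by omega
      refine ⟨i, i, le_refl _, ⟨?_, ?_⟩, ?_, ?_⟩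
      · exact YoungDiagram.mem_iff_lt_rowLen.2 (by omega)
      · intro h; exact absurd (YoungDiagram.mem_iff_lt_rowLen.1 h) (by omega)
      · have hd : (i, i) ∈ γ := YoungDiagram.mem_iff_lt_rowLen.2 (by omega)
        have := hγ i hd
        exact YoungDiagram.mem_iff_lt_colLen.2 (by omega)
      · intro h
        have : (i, i) ∈ β := β.up_left_mem (by omega) (le_refl _) h
        exact absurd (YoungDiagram.mem_iff_lt_rowLen.1 this) (by omega)
    · push_neg at hB
      have hγr : γ.rowLen i = β.rowLen i + 1 := by omega
      have hdβ : (i, i) ∈ β := YoungDiagram.mem_iff_lt_rowLen.2 hB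
      have hdγ : (i, i) ∈ γ := hle hdβ
      have hcolβ : β.colLen i = β.rowLen i + 1 := hβ i hdβ
      have hcolγ : γ.colLen i = β.rowLen i + 2 := by rw [hγ i hdγ]; omega
      refine ⟨i, β.rowLen i, by omega, ⟨?_, ?_⟩, ?_, ?_⟩
      · exact YoungDiagram.mem_iff_lt_rowLen.2 (by omega)
      · intro h; exact absurd (YoungDiagram.mem_iff_lt_rowLen.1 h) (by omega)
      · exact YoungDiagram.mem_iff_lt_colLen.2 (by omega)
      · intro h; exact absurd (YoungDiagram.mem_iff_lt_colLen.1 h) (by omega)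
  obtain ⟨a, c, hac, ⟨hp1, hp2⟩, hq1, hq2⟩ := key
  refine ⟨a, c, hac, ?_⟩
  have hsub : ({(a, c), (c + 1, a)} : Finset (ℕ × ℕ)) ⊆ γ.cells \ β.cells := by
    intro x hx
    simp only [Finset.mem_insert, Finset.mem_singleton] at hx
    rcases hx with rfl | rfl <;> simp [Finset.mem_sdiff, *]
  have hpq : ((a, c) : ℕ × ℕ) ≠ (c + 1, a) := by
    intro h
    have := congrArg Prod.fst h
    simp at this; omega
  have hcard2 : ({(a, c), (c + 1, a)} : Finset (ℕ × ℕ)).card = 2 := by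
    rw [Finset.card_insert_of_notMem (by simpa using hpq), Finset.card_singleton]
  exact (Finset.eq_of_subset_of_card_le hsub (by omega)).symm

/-- If `τ` and `τ₁` are both intermediate diagrams whose skews over `σ` are
"conjugate pairs", then either `τ = τ₁` or the skew of `τ` over `σ` equals the
skew of `α` over `τ₁`. -/
lemma keylem {σ τ₁ τ α : YoungDiagram}
    (hστ₁ : σ ≤ τ₁) (hτ₁α : τ₁ ≤ α) (hστ : σ ≤ τ) (hτα : τ ≤ α)
    {i₁ c₁ i₁' c₁' i c : ℕ} (h₁ : i₁ ≤ c₁) (h₁' : i₁' ≤ c₁') (h : i ≤ c)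
    (e₁ : τ₁.cells \ σ.cells = {(i₁, c₁), (c₁ + 1, i₁)})
    (e₁' : α.cells \ τ₁.cells = {(i₁', c₁'), (c₁' + 1, i₁')})
    (e : τ.cells \ σ.cells = {(i, c), (c + 1, i)}) :
    τ = τ₁ ∨ τ.cells \ σ.cells = α.cells \ τ₁.cells := by
  have hu : ((i, c) : ℕ × ℕ) ∈ τ.cells \ σ.cells := by
    rw [e]; exact Finset.mem_insert_self _ _
  have huα : ((i, c) : ℕ × ℕ) ∈ α.cells := by
    have := (Finset.mem_sdiff.1 hu).1
    exact YoungDiagram.cells_subset_iff.2 hτα this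
  have huσ : ((i, c) : ℕ × ℕ) ∉ σ.cells := (Finset.mem_sdiff.1 hu).2
  by_cases hmem : ((i, c) : ℕ × ℕ) ∈ τ₁.cells
  · -- (i,c) ∈ τ₁ \ σ
    have : ((i, c) : ℕ × ℕ) ∈ τ₁.cells \ σ.cells := Finset.mem_sdiff.2 ⟨hmem, huσ⟩
    rw [e₁] at this
    simp only [Finset.mem_insert, Finset.mem_singleton, Prod.mk.injEq] at this
    rcases this with ⟨rfl, rfl⟩ | ⟨hi, hc⟩
    · left
      apply YoungDiagram.ext
      have ht : σ.cells ∪ (τ.cells \ σ.cells) = τ.cells :=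
        Finset.union_sdiff_of_subset (YoungDiagram.cells_subset_iff.2 hστ)
      have ht₁ : σ.cells ∪ (τ₁.cells \ σ.cells) = τ₁.cells :=
        Finset.union_sdiff_of_subset (YoungDiagram.cells_subset_iff.2 hστ₁)
      rw [← ht, ← ht₁, e, e₁]
    · omega
  · -- (i,c) ∈ α \ τ₁
    have : ((i, c) : ℕ × ℕ) ∈ α.cells \ τ₁.cells := Finset.mem_sdiff.2 ⟨huα, hmem⟩
    rw [e₁'] at this
    simp only [Finset.mem_insert, Finset.mem_singleton, Prod.mk.injEq] at this
    rcases this with ⟨rfl, rfl⟩ | ⟨hi, hc⟩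
    · right; rw [e, e₁']
    · omega

/-- for `α ∈ Q₋₁(2k)` and `σ ∈ Q₋₁(2(k-2))`, each with at most `r/2`
parts, the set of `τ ∈ Q₋₁(2(k-1))` with `σ ⊂₂ τ ⊂₂ α` has at most two elements. -/
theorem stmt4 (r k : ℕ) (hk : 2 ≤ k) (α σ : YoungDiagram)
    (hQα : IsQneg1 α) (hQσ : IsQneg1 σ)
    (hα : α.card = 2 * k) (hσ : σ.card = 2 * (k - 2))
    (hαl : α.colLen 0 ≤ r / 2) (hσl : σ.colLen 0 ≤ r / 2) :
    ∀ τ₁ τ₂ τ₃ : YoungDiagram,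
      (IsQneg1 τ₁ ∧ τ₁.card = 2 * (k - 1) ∧ Sub2 σ τ₁ ∧ Sub2 τ₁ α) →
      (IsQneg1 τ₂ ∧ τ₂.card = 2 * (k - 1) ∧ Sub2 σ τ₂ ∧ Sub2 τ₂ α) →
      (IsQneg1 τ₃ ∧ τ₃.card = 2 * (k - 1) ∧ Sub2 σ τ₃ ∧ Sub2 τ₃ α) →
      τ₁ = τ₂ ∨ τ₁ = τ₃ ∨ τ₂ = τ₃ := by
  rintro τ₁ τ₂ τ₃ ⟨hQ1, hc1, ⟨hl1, -⟩, ⟨hr1, -⟩⟩ ⟨hQ2, hc2, ⟨hl2, -⟩, ⟨hr2, -⟩⟩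
    ⟨hQ3, hc3, ⟨hl3, -⟩, ⟨hr3, -⟩⟩
  have hcard1 : τ₁.card = σ.card + 2 := by omega
  have hcard2 : τ₂.card = σ.card + 2 := by omega
  have hcard3 : τ₃.card = σ.card + 2 := by omega
  have hcardα1 : α.card = τ₁.card + 2 := by omega
  obtain ⟨i₁, c₁, h₁, e₁⟩ := step hQσ hQ1 hl1 hcard1
  obtain ⟨i₁', c₁', h₁', e₁'⟩ := step hQ1 hQα hr1 hcardα1
  obtain ⟨i₂, c₂, h₂, e₂⟩ := step hQσ hQ2 hl2 hcard2
  obtain ⟨i₃, c₃, h₃, e₃⟩ := step hQσ hQ3 hl3 hcard3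
  rcases keylem hl1 hr1 hl2 hr2 h₁ h₁' h₂ e₁ e₁' e₂ with h12 | h12
  · exact Or.inl h12.symm
  rcases keylem hl1 hr1 hl3 hr3 h₁ h₁' h₃ e₁ e₁' e₃ with h13 | h13
  · exact Or.inr (Or.inl h13.symm)
  · right; right
    apply YoungDiagram.ext
    have ht₂ : σ.cells ∪ (τ₂.cells \ σ.cells) = τ₂.cells :=
      Finset.union_sdiff_of_subset (YoungDiagram.cells_subset_iff.2 hl2)
    have ht₃ : σ.cells ∪ (τ₃.cells \ σ.cells) = τ₃.cells :=
      Finset.union_sdiff_of_subset (YoungDiagram.cells_subset_iff.2 hl3)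
    rw [← ht₂, ← ht₃, h12, h13]
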